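/- For every metric space (S,ρ), every sequence x : ℕ → S, all integers m, k, n ≥ 1 and every real r ≥ 0, with h = k + m − 1 and n' = n + m − 1, the k-recurrence rate satisfies n²·RR^m_k(x,n,r) = (n')²·[RR_h(x,n',r) − (m − 1)·(C_h(x,n',r) − C_{h+1}(x,n',r))], where RR_h = RR^1_h and C_h = C^1_h denote the non-embedded (m = 1) quantities. -/

import Mathlib

open Filter Topology MeasureTheory

/-- `dmax h x y = max_{0 ≤ l < h} dist (x l) (y l)` (equals 0 if `h = 0`). -/
noncomputable def dmax {S : Type*} [MetricSpace S] (h : ℕ) (x y : ℕ → S) : ℝ :=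
  (((Finset.range h).sup fun l => nndist (x l) (y l) : NNReal) : ℝ)

/-- the shifted sequence `x^{(i)}`. -/
def shift {S : Type*} (i : ℕ) (x : ℕ → S) : ℕ → S := fun l => x (i + l)

/-- `(i,j)` is an `r`-recurrence in the `m`'th embedding of the trajectory of `x`. -/
def isRec {S : Type*} [MetricSpace S] (m : ℕ) (x : ℕ → S) (r : ℝ) (i j : ℕ) : Prop :=
  dmax m (shift i x) (shift j x) ≤ r

open Classical in
/-- `L^m_k(x,n,r)`: the number of diagonal lines of length `k`
in the `n × n` recurrence plot. -/
noncomputable def Lcount {S : Type*} [MetricSpace S] (m k : ℕ) (x : ℕ → S) (n : ℕ)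
    (r : ℝ) : ℕ :=
  ((Finset.range (n + 1) ×ˢ Finset.range (n + 1)).filter fun p =>
    p.1 + k ≤ n ∧ p.2 + k ≤ n ∧
    (∀ h < k, isRec m x r (p.1 + h) (p.2 + h)) ∧
    (p.1 = 0 ∨ p.2 = 0 ∨ ¬ isRec m x r (p.1 - 1) (p.2 - 1)) ∧
    (p.1 + k = n ∨ p.2 + k = n ∨ ¬ isRec m x r (p.1 + k) (p.2 + k))).card

open Classical in
/-- `n² · C^m_k(x,n,r)`: the number of pairs `(i,j)`, `0 ≤ i,j ≤ n-k`, with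
`d^m_k(x^{(i)}, x^{(j)}) ≤ r`. -/
noncomputable def Ccount {S : Type*} [MetricSpace S] (m k : ℕ) (x : ℕ → S) (n : ℕ)
    (r : ℝ) : ℕ :=
  ((Finset.range (n + 1) ×ˢ Finset.range (n + 1)).filter fun p =>
    p.1 + k ≤ n ∧ p.2 + k ≤ n ∧
    dmax (m + k - 1) (shift p.1 x) (shift p.2 x) ≤ r).card

/-- The correlation sum `C^m_k(x,n,r)`. -/
noncomputable def Csum {S : Type*} [MetricSpace S] (m k : ℕ) (x : ℕ → S) (n : ℕ)
    (r : ℝ) : ℝ :=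
  (Ccount m k x n r : ℝ) / (n : ℝ) ^ 2

/-- The `k`-recurrence rate `RR^m_k(x,n,r) = (1/n²) Σ_{l ≥ k} l · L^m_l(x,n,r)`. -/
noncomputable def RRsum {S : Type*} [MetricSpace S] (m k : ℕ) (x : ℕ → S) (n : ℕ)
    (r : ℝ) : ℝ :=
  (1 / (n : ℝ) ^ 2) * ∑' l : ℕ, if k ≤ l then (l : ℝ) * (Lcount m l x n r : ℝ) else 0

section AuxProofs
open Classical

lemma dmax_le_iff {S : Type*} [MetricSpace S] {r : ℝ} (hr : 0 ≤ r) (h : ℕ) (y z : ℕ → S) :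
    dmax h y z ≤ r ↔ ∀ l < h, dist (y l) (z l) ≤ r := by
  constructor
  · intro H l hl
    refine le_trans ?_ H
    rw [dist_nndist]
    exact NNReal.coe_le_coe.mpr
      (Finset.le_sup (f := fun l => nndist (y l) (z l)) (Finset.mem_range.mpr hl))
  · intro H
    have : ((Finset.range h).sup fun l => nndist (y l) (z l)) ≤ (⟨r, hr⟩ : NNReal) := by
      refine Finset.sup_le fun l hl => ?_
      have := H l (Finset.mem_range.mp hl)
      rw [dist_nndist] at this
      exact this
    exact this

lemma isRec_iff {S : Type*} [MetricSpace S] {r : ℝ} (hr : 0 ≤ r) (m : ℕ) (x : ℕ → S)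
    (i j : ℕ) : isRec m x r i j ↔ ∀ l < m, dist (x (i + l)) (x (j + l)) ≤ r :=
  dmax_le_iff hr m _ _

lemma isRec_one {S : Type*} [MetricSpace S] {r : ℝ} (hr : 0 ≤ r) (x : ℕ → S)
    (i j : ℕ) : isRec 1 x r i j ↔ dist (x i) (x j) ≤ r := by
  rw [isRec_iff hr]
  constructor
  · intro H; simpa using H 0 (by omega)
  · intro H l hl; interval_cases l; simpa using H

lemma Lcount_shift {S : Type*} [MetricSpace S] (x : ℕ → S) {r : ℝ} (hr : 0 ≤ r)
    (m l n : ℕ) (hm : 1 ≤ m) (hl : 1 ≤ l) :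
    Lcount m l x n r = Lcount 1 (l + m - 1) x (n + m - 1) r := by
  set Q : ℕ → ℕ → Prop := fun i j => dist (x i) (x j) ≤ r with hQ
  have hrec : ∀ m' i j, isRec m' x r i j ↔ ∀ s < m', Q (i + s) (j + s) :=
    fun m' i j => isRec_iff hr m' x i j
  unfold Lcount
  apply congrArg Finset.card
  ext ⟨i, j⟩
  simp only [Finset.mem_filter, Finset.mem_product, Finset.mem_range]
  constructor
  · rintro ⟨hij, h1, h2, h3, h4, h5⟩
    have interior : ∀ t < l + m - 1, Q (i + t) (j + t) := by
      intro t ht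
      have hh : min t (l - 1) < l := by omega
      have hs : t - min t (l - 1) < m := by omega
      have := ((hrec m _ _).mp (h3 _ hh)) _ hs
      rwa [show i + min t (l-1) + (t - min t (l-1)) = i + t by omega,
           show j + min t (l-1) + (t - min t (l-1)) = j + t by omega] at this
    refine ⟨⟨by omega, by omega⟩, by omega, by omega, ?_, ?_, ?_⟩
    · intro t ht
      rw [hrec 1]
      intro s hs
      interval_cases s
      simpa using interior t ht
    · rcases h4 with h | h | h
      · exact Or.inl h
      · exact Or.inr (Or.inl h)
      · rcases Nat.eq_zero_or_pos i with hi | hi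
        · exact Or.inl hi
        rcases Nat.eq_zero_or_pos j with hj | hj
        · exact Or.inr (Or.inl hj)
        refine Or.inr (Or.inr fun hc => h ?_)
        rw [hrec m]
        intro s hs
        rcases Nat.eq_zero_or_pos s with rfl | hs1
        · have := (hrec 1 _ _).mp hc 0 (by omega)
          simpa using this
        · have := interior (s - 1) (by omega)
          rwa [show i + (s-1) = i - 1 + s by omega, show j + (s-1) = j - 1 + s by omega] at this
    · rcases h5 with h | h | h
      · exact Or.inl (by omega)
      · exact Or.inr (Or.inl (by omega))
      refine Or.inr (Or.inr fun hc => h ?_)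
      rw [hrec m]
      intro s hs
      rcases Nat.lt_or_ge s (m - 1) with hs1 | hs1
      · have := interior (l + s) (by omega)
        rwa [show i + (l + s) = i + l + s by omega, show j + (l + s) = j + l + s by omega] at this
      · have hsm : s = m - 1 := by omega
        have := (hrec 1 _ _).mp hc 0 (by omega)
        rw [show i + (l + m - 1) + 0 = i + l + s by omega,
            show j + (l + m - 1) + 0 = j + l + s by omega] at this
        exact this
  · rintro ⟨hij, h1, h2, h3, h4, h5⟩
    have interior : ∀ t < l + m - 1, Q (i + t) (j + t) := by
      intro t ht
      have := (hrec 1 _ _).mp (h3 t ht) 0 (by omega)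
      simpa using this
    refine ⟨⟨by omega, by omega⟩, by omega, by omega, ?_, ?_, ?_⟩
    · intro t ht
      rw [hrec m]
      intro s hs
      have := interior (t + s) (by omega)
      rwa [show i + (t + s) = i + t + s by omega, show j + (t + s) = j + t + s by omega] at this
    · rcases h4 with h | h | h
      · exact Or.inl h
      · exact Or.inr (Or.inl h)
      · rcases Nat.eq_zero_or_pos i with hi | hi
        · exact Or.inl hi
        rcases Nat.eq_zero_or_pos j with hj | hj
        · exact Or.inr (Or.inl hj)
        refine Or.inr (Or.inr fun hc => h ?_)
        rw [hrec 1]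
        intro s hs
        interval_cases s
        have := (hrec m _ _).mp hc 0 (by omega)
        simpa using this
    · rcases h5 with h | h | h
      · exact Or.inl (by omega)
      · exact Or.inr (Or.inl (by omega))
      refine Or.inr (Or.inr fun hc => h ?_)
      rw [hrec 1]
      intro s hs
      interval_cases s
      have := (hrec m _ _).mp hc (m - 1) (by omega)
      rwa [show i + l + (m - 1) = i + (l + m - 1) + 0 by omega,
           show j + l + (m - 1) = j + (l + m - 1) + 0 by omega] at this

lemma ccount_split {S : Type*} [MetricSpace S] (x : ℕ → S) {r : ℝ} (hr : 0 ≤ r)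
    (k n : ℕ) (hk : 1 ≤ k) :
    Ccount 1 k x n r = Ccount 1 (k + 1) x n r + ∑ l ∈ Finset.Icc k n, Lcount 1 l x n r := by
  set Q : ℕ → ℕ → Prop := fun i j => dist (x i) (x j) ≤ r with hQdef
  -- the correlation sets
  set A : ℕ → Finset (ℕ × ℕ) := fun c =>
    (Finset.range (n + 1) ×ˢ Finset.range (n + 1)).filter
      (fun p => p.1 + c ≤ n ∧ p.2 + c ≤ n ∧ ∀ h < c, Q (p.1 + h) (p.2 + h)) with hA
  -- the line sets
  set Lf : ℕ → Finset (ℕ × ℕ) := fun l =>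
    (Finset.range (n + 1) ×ˢ Finset.range (n + 1)).filter
      (fun p => p.1 + l ≤ n ∧ p.2 + l ≤ n ∧
        (∀ h < l, Q (p.1 + h) (p.2 + h)) ∧
        (p.1 = 0 ∨ p.2 = 0 ∨ ¬ Q (p.1 - 1) (p.2 - 1)) ∧
        (p.1 + l = n ∨ p.2 + l = n ∨ ¬ Q (p.1 + l) (p.2 + l))) with hLf
  have hC : ∀ c : ℕ, 1 ≤ c → Ccount 1 c x n r = (A c).card := by
    intro c hc
    apply congrArg Finset.card
    apply Finset.filter_congr
    rintro ⟨i, j⟩ _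
    have : dmax (1 + c - 1) (shift i x) (shift j x) ≤ r ↔ ∀ h < c, Q (i + h) (j + h) := by
      rw [show 1 + c - 1 = c by omega, dmax_le_iff hr]
      exact Iff.rfl
    rw [this]
  have hL : ∀ l : ℕ, Lcount 1 l x n r = (Lf l).card := by
    intro l
    apply congrArg Finset.card
    apply Finset.filter_congr
    rintro ⟨i, j⟩ _
    simp only [isRec_one hr]
    exact Iff.rfl
  have hsub : A (k + 1) ⊆ A k := by
    intro p hp
    simp only [hA, Finset.mem_filter] at hp ⊢
    obtain ⟨hmem, h1, h2, h3⟩ := hp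
    exact ⟨hmem, by omega, by omega, fun h hh => h3 h (by omega)⟩
  -- the difference set equals the union of images of line-sets
  have key : A k \ A (k + 1) =
      (Finset.Icc k n).biUnion (fun l => (Lf l).image
        (fun p => (p.1 + (l - k), p.2 + (l - k)))) := by
    ext ⟨i, j⟩
    simp only [Finset.mem_sdiff, hA, hLf, Finset.mem_biUnion, Finset.mem_image,
      Finset.mem_filter, Finset.mem_product, Finset.mem_range, Finset.mem_Icc, Prod.exists]
    constructor
    · rintro ⟨⟨⟨hi, hj⟩, h1, h2, h3⟩, hnot⟩
      have E : i + k = n ∨ j + k = n ∨ ¬ Q (i + k) (j + k) := by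
        by_contra hE
        push_neg at hE
        obtain ⟨e1, e2, e3⟩ := hE
        exact hnot ⟨⟨hi, hj⟩, by omega, by omega, fun h hh => by
          rcases Nat.lt_or_ge h k with hc | hc
          · exact h3 h hc
          · have : h = k := by omega
            subst this; exact e3⟩
      set P : ℕ → Prop := fun t => t ≤ i ∧ t ≤ j ∧ ∀ s < t, Q (i - 1 - s) (j - 1 - s) with hP
      set t := Nat.findGreatest P (min i j) with ht
      have hPt : P t := Nat.findGreatest_spec (m := 0) (by omega) ⟨by omega, by omega, by omega⟩
      obtain ⟨hti, htj, htQ⟩ := hPt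
      refine ⟨k + t, ⟨by omega, by omega⟩, i - t, j - t, ⟨⟨by omega, by omega⟩,
        by omega, by omega, ?_, ?_, ?_⟩, ?_⟩
      · intro h hh
        rcases Nat.lt_or_ge h t with hc | hc
        · have := htQ (t - 1 - h) (by omega)
          rwa [show i - 1 - (t - 1 - h) = i - t + h by omega,
               show j - 1 - (t - 1 - h) = j - t + h by omega] at this
        · have := h3 (h - t) (by omega)
          rwa [show i + (h - t) = i - t + h by omega,
               show j + (h - t) = j - t + h by omega] at this
      · rcases Nat.eq_zero_or_pos (i - t) with hz | hz
        · exact Or.inl hz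
        rcases Nat.eq_zero_or_pos (j - t) with hz' | hz'
        · exact Or.inr (Or.inl hz')
        refine Or.inr (Or.inr fun hQc => ?_)
        have hgt : ¬ P (t + 1) := by
          apply Nat.findGreatest_is_greatest (n := i ⊓ j) <;> omega
        apply hgt
        refine ⟨by omega, by omega, fun s hs => ?_⟩
        rcases Nat.lt_or_ge s t with hc | hc
        · exact htQ s hc
        · have : s = t := by omega
          subst this
          rwa [show i - 1 - t = i - t - 1 by omega, show j - 1 - t = j - t - 1 by omega]
      · rcases E with e | e | e
        · exact Or.inl (by omega)
        · exact Or.inr (Or.inl (by omega))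
        · refine Or.inr (Or.inr fun hQc => e ?_)
          rwa [show i - t + (k + t) = i + k by omega,
               show j - t + (k + t) = j + k by omega] at hQc
      · rw [Prod.mk.injEq]; exact ⟨by omega, by omega⟩
    · rintro ⟨l, ⟨hkl, hln⟩, a, b, ⟨⟨ha, hb⟩, h1, h2, h3, h4, h5⟩, heq⟩
      injection heq with e1 e2
      subst e1; subst e2
      constructor
      · refine ⟨⟨by omega, by omega⟩, by omega, by omega, fun h hh => ?_⟩
        have := h3 (l - k + h) (by omega)
        rwa [show a + (l - k + h) = a + (l - k) + h by omega,
             show b + (l - k + h) = b + (l - k) + h by omega] at this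
      · rintro ⟨_, g1, g2, g3⟩
        rcases h5 with e | e | e
        · omega
        · omega
        · apply e
          have := g3 k (by omega)
          rwa [show a + (l - k) + k = a + l by omega,
               show b + (l - k) + k = b + l by omega] at this
    -- end key
  have hdisj : ∀ l₁ ∈ Finset.Icc k n, ∀ l₂ ∈ Finset.Icc k n, l₁ ≠ l₂ →
      Disjoint ((Lf l₁).image (fun p => (p.1 + (l₁ - k), p.2 + (l₁ - k))))
               ((Lf l₂).image (fun p => (p.1 + (l₂ - k), p.2 + (l₂ - k)))) := by
    have aux : ∀ l₁ l₂ : ℕ, k ≤ l₁ → l₁ < l₂ → ∀ a b a' b' : ℕ,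
        (a, b) ∈ Lf l₁ → (a', b') ∈ Lf l₂ →
        a + (l₁ - k) = a' + (l₂ - k) → b + (l₁ - k) = b' + (l₂ - k) → False := by
      intro l₁ l₂ hkl hlt a b a' b' hm1 hm2 e1 e2
      simp only [hLf, Finset.mem_filter, Finset.mem_product, Finset.mem_range] at hm1 hm2
      obtain ⟨_, _, _, p3, p4, _⟩ := hm1
      obtain ⟨_, _, _, q3, _, _⟩ := hm2
      have ha : a = a' + (l₂ - l₁) := by omega
      have hb : b = b' + (l₂ - l₁) := by omega
      have hnq : ¬ Q (a - 1) (b - 1) := by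
        rcases p4 with e | e | e
        · omega
        · omega
        · exact e
      apply hnq
      have := q3 (l₂ - l₁ - 1) (by omega)
      rwa [show a' + (l₂ - l₁ - 1) = a - 1 by omega,
           show b' + (l₂ - l₁ - 1) = b - 1 by omega] at this
    intro l₁ hl₁ l₂ hl₂ hne
    simp only [Finset.mem_Icc] at hl₁ hl₂
    rw [Finset.disjoint_left]
    rintro ⟨i, j⟩ hi1 hi2
    simp only [Finset.mem_image, Prod.exists] at hi1 hi2
    obtain ⟨a, b, hab, e1⟩ := hi1
    obtain ⟨a', b', hab', e2⟩ := hi2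
    have e1' := Prod.mk.injEq .. ▸ e1
    rcases Nat.lt_or_ge l₁ l₂ with hc | hc
    · exact aux l₁ l₂ hl₁.1 hc a b a' b' hab hab'
        (by rw [Prod.ext_iff] at e1 e2; omega)
        (by rw [Prod.ext_iff] at e1 e2; omega)
    · exact aux l₂ l₁ hl₂.1 (by omega) a' b' a b hab' hab
        (by rw [Prod.ext_iff] at e1 e2; omega)
        (by rw [Prod.ext_iff] at e1 e2; omega)
  have hcard : (A k \ A (k + 1)).card = ∑ l ∈ Finset.Icc k n, (Lf l).card := by
    rw [key, Finset.card_biUnion hdisj]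
    refine Finset.sum_congr rfl fun l _ => ?_
    apply Finset.card_image_of_injective
    intro p q hpq
    rw [Prod.ext_iff] at hpq ⊢
    simp only at hpq ⊢
    omega
  have := Finset.card_sdiff_add_card_eq_card hsub
  rw [hC k hk, hC (k + 1) (by omega)]
  have hLsum : ∑ l ∈ Finset.Icc k n, Lcount 1 l x n r = ∑ l ∈ Finset.Icc k n, (Lf l).card :=
    Finset.sum_congr rfl fun l _ => hL l
  omega

lemma Lcount_eq_zero {S : Type*} [MetricSpace S] (m l : ℕ) (x : ℕ → S) {n : ℕ} (r : ℝ)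
    (hl : n < l) : Lcount m l x n r = 0 := by
  classical
  unfold Lcount
  rw [Finset.card_eq_zero, Finset.filter_eq_empty_iff]
  rintro p _ ⟨h1, _⟩
  omega

lemma sq_mul_RRsum {S : Type*} [MetricSpace S] (m k : ℕ) (x : ℕ → S) {n : ℕ} (r : ℝ)
    (hn : 1 ≤ n) :
    (n : ℝ) ^ 2 * RRsum m k x n r = ∑ l ∈ Finset.Icc k n, (l : ℝ) * (Lcount m l x n r : ℝ) := by
  classical
  unfold RRsum
  have hts : (∑' l : ℕ, if k ≤ l then (l : ℝ) * (Lcount m l x n r : ℝ) else 0)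
      = ∑ l ∈ Finset.range (n + 1), if k ≤ l then (l : ℝ) * (Lcount m l x n r : ℝ) else 0 := by
    apply tsum_eq_sum
    intro l hl
    rw [Finset.mem_range, not_lt] at hl
    rw [Lcount_eq_zero m l x r (by omega)]
    simp
  rw [hts]
  have hn2 : ((n : ℝ) ^ 2) ≠ 0 := by positivity
  rw [← mul_assoc, mul_one_div, div_self hn2, one_mul]
  rw [← Finset.sum_filter]
  congr 1
  ext l
  simp only [Finset.mem_filter, Finset.mem_range, Finset.mem_Icc]
  omega


end AuxProofs

/-- For every metric space `(S,ρ)`, every sequence `x : ℕ → S`,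
all integers `m, k, n ≥ 1` and every real `r ≥ 0`, with `h = k + m − 1` and
`n' = n + m − 1`, the `k`-recurrence rate satisfies
`n² · RR^m_k(x,n,r) = (n')² · [RR_h(x,n',r) − (m − 1)·(C_h(x,n',r) − C_{h+1}(x,n',r))]`,
where `RR_h = RR^1_h` and `C_h = C^1_h` are the non-embedded quantities. -/
theorem embedded_recurrenceRate_eq_nonembedded {S : Type*} [MetricSpace S] (x : ℕ → S)
    (m k n : ℕ) (hm : 1 ≤ m) (hk : 1 ≤ k) (hn : 1 ≤ n) (r : ℝ) (hr : 0 ≤ r) :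
    (n : ℝ) ^ 2 * RRsum m k x n r =
      ((n + m - 1 : ℕ) : ℝ) ^ 2 *
        (RRsum 1 (k + m - 1) x (n + m - 1) r -
          ((m : ℝ) - 1) *
            (Csum 1 (k + m - 1) x (n + m - 1) r - Csum 1 (k + m) x (n + m - 1) r)) := by
  set n' := n + m - 1 with hn'
  set h := k + m - 1 with hh
  have hn'1 : 1 ≤ n' := by omega
  have hn2 : ((n' : ℝ) ^ 2) ≠ 0 := by positivity
  -- RHS Csum terms
  have hCs : ∀ c : ℕ, ((n' : ℕ) : ℝ) ^ 2 * Csum 1 c x n' r = (Ccount 1 c x n' r : ℝ) := by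
    intro c
    unfold Csum
    field_simp
  -- expand RHS
  have expand : ((n' : ℕ) : ℝ) ^ 2 *
      (RRsum 1 h x n' r - ((m : ℝ) - 1) * (Csum 1 h x n' r - Csum 1 (k + m) x n' r))
      = (n' : ℝ) ^ 2 * RRsum 1 h x n' r
        - ((m : ℝ) - 1) * ((Ccount 1 h x n' r : ℝ) - (Ccount 1 (k + m) x n' r : ℝ)) := by
    rw [← hCs h, ← hCs (k + m)]
    ring
  rw [expand, sq_mul_RRsum 1 h x r hn'1, sq_mul_RRsum m k x r hn]
  -- Ccount difference
  have hdiff : (Ccount 1 h x n' r : ℝ) - (Ccount 1 (k + m) x n' r : ℝ)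
      = ∑ l ∈ Finset.Icc h n', (Lcount 1 l x n' r : ℝ) := by
    have := ccount_split x hr h n' (by omega)
    rw [show h + 1 = k + m by omega] at this
    rw [this]
    push_cast
    ring
  rw [hdiff]
  -- rewrite LHS Lcounts
  have hL : ∑ l ∈ Finset.Icc k n, (l : ℝ) * (Lcount m l x n r : ℝ)
      = ∑ l ∈ Finset.Icc k n, (l : ℝ) * (Lcount 1 (l + m - 1) x n' r : ℝ) := by
    refine Finset.sum_congr rfl fun l hl => ?_
    rw [Finset.mem_Icc] at hl
    rw [Lcount_shift x hr m l n hm (by omega)]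
  rw [hL]
  rw [Finset.mul_sum, ← Finset.sum_sub_distrib]
  refine Finset.sum_nbij' (i := fun l => l + (m - 1)) (j := fun l => l - (m - 1))
    ?_ ?_ ?_ ?_ ?_
  · intro a ha; rw [Finset.mem_Icc] at ha ⊢; omega
  · intro a ha; rw [Finset.mem_Icc] at ha ⊢; omega
  · intro a ha; omega
  · intro a ha; rw [Finset.mem_Icc] at ha; omega
  · intro a ha
    rw [Finset.mem_Icc] at ha
    rw [show a + (m - 1) = a + m - 1 by omega,
      Nat.cast_sub (by omega : 1 ≤ a + m)]
    push_cast
    ring
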